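/- Any closed curve of length at most 1/2 + 1/50 that encloses an axis-parallel square of side length 1/8 lies entirely within distance sqrt((1/16+1/100)^2 - (1/16)^2) of the boundary of the square. -/

import Mathlib

open Set Metric Real Bornology

noncomputable section


abbrev E2 := EuclideanSpace ℝ (Fin 2)

lemma distE (X Y : E2) : dist X Y = Real.sqrt ((X 0 - Y 0)^2 + (X 1 - Y 1)^2) := by
  rw [EuclideanSpace.dist_eq, Fin.sum_univ_two]
  congr 1
  rw [Real.dist_eq, Real.dist_eq, sq_abs, sq_abs]

lemma tour5 (γ : ℝ → E2) (hclosed : γ 0 = γ 1)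
    (hlen : eVariationOn γ (Set.Icc (0:ℝ) 1) ≤ ENNReal.ofReal (1/2 + 1/50))
    (w : Fin 5 → ℝ) (hmono : Monotone w) (hin : ∀ i, w i ∈ Set.Icc (0:ℝ) 1) :
    dist (γ (w 0)) (γ (w 1)) + dist (γ (w 1)) (γ (w 2)) + dist (γ (w 2)) (γ (w 3))
      + dist (γ (w 3)) (γ (w 4)) + dist (γ (w 4)) (γ (w 0)) ≤ 1/2 + 1/50 := by
  classical
  set u : ℕ → ℝ := fun n => match n with
    | 0 => 0
    | 1 => w 0
    | 2 => w 1
    | 3 => w 2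
    | 4 => w 3
    | 5 => w 4
    | _ => 1 with hu
  have humono : Monotone u := by
    apply monotone_nat_of_le_succ
    intro n
    match n with
    | 0 => exact (hin 0).1
    | 1 => exact hmono (by decide : (0:Fin 5) ≤ 1)
    | 2 => exact hmono (by decide : (1:Fin 5) ≤ 2)
    | 3 => exact hmono (by decide : (2:Fin 5) ≤ 3)
    | 4 => exact hmono (by decide : (3:Fin 5) ≤ 4)
    | 5 => exact (hin 4).2
    | (n+6) => exact le_rfl
  have huin : ∀ i, u i ∈ Set.Icc (0:ℝ) 1 := by
    intro n
    match n with
    | 0 => exact ⟨le_rfl, by show (0:ℝ) ≤ 1; norm_num⟩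
    | 1 => exact hin 0
    | 2 => exact hin 1
    | 3 => exact hin 2
    | 4 => exact hin 3
    | 5 => exact hin 4
    | (n+6) => exact show (1:ℝ) ∈ Set.Icc (0:ℝ) 1 by norm_num
  have hsum := eVariationOn.sum_le (f := γ) (n := 6) humono huin
  have hle := hsum.trans hlen
  -- convert to real
  have hexp : (∑ i ∈ Finset.range 6, edist (γ (u (i + 1))) (γ (u i)))
      = ENNReal.ofReal (dist (γ (w 0)) (γ 0) + dist (γ (w 1)) (γ (w 0))
        + dist (γ (w 2)) (γ (w 1)) + dist (γ (w 3)) (γ (w 2))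
        + dist (γ (w 4)) (γ (w 3)) + dist (γ 1) (γ (w 4))) := by
    rw [show (6:ℕ) = 5+1 from rfl]
    rw [Finset.sum_range_succ, Finset.sum_range_succ, Finset.sum_range_succ,
      Finset.sum_range_succ, Finset.sum_range_succ, Finset.sum_range_succ,
      Finset.sum_range_zero]
    simp only [hu]
    rw [zero_add]
    rw [edist_dist, edist_dist, edist_dist, edist_dist, edist_dist, edist_dist]
    rw [← ENNReal.ofReal_add, ← ENNReal.ofReal_add, ← ENNReal.ofReal_add,
      ← ENNReal.ofReal_add, ← ENNReal.ofReal_add] <;>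
      first
      | exact dist_nonneg
      | positivity
  rw [hexp] at hle
  have hreal : dist (γ (w 0)) (γ 0) + dist (γ (w 1)) (γ (w 0))
        + dist (γ (w 2)) (γ (w 1)) + dist (γ (w 3)) (γ (w 2))
        + dist (γ (w 4)) (γ (w 3)) + dist (γ 1) (γ (w 4)) ≤ 1/2 + 1/50 := by
    have := (ENNReal.ofReal_le_ofReal_iff (by norm_num)).1 hle
    linarith
  have hclose : dist (γ (w 4)) (γ (w 0)) ≤ dist (γ 1) (γ (w 4)) + dist (γ (w 0)) (γ 0) := by
    calc dist (γ (w 4)) (γ (w 0)) ≤ dist (γ (w 4)) (γ 1) + dist (γ 1) (γ (w 0)) :=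
          dist_triangle _ _ _
    _ = dist (γ 1) (γ (w 4)) + dist (γ (w 0)) (γ 0) := by
          rw [dist_comm (γ (w 4)) (γ 1), dist_comm (γ 1) (γ (w 0)), hclosed]
  have d01 := dist_comm (γ (w 0)) (γ (w 1))
  have d12 := dist_comm (γ (w 1)) (γ (w 2))
  have d23 := dist_comm (γ (w 2)) (γ (w 3))
  have d34 := dist_comm (γ (w 3)) (γ (w 4))
  linarith


lemma ray_exit {E : Type*} [NormedAddCommGroup E] [NormedSpace ℝ E]
    {U : Set E} (hU : IsOpen U) (hB : IsBounded U) {q : E} (hq : q ∈ U)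
    {v : E} (hv : v ≠ 0) : ∃ T : ℝ, 0 < T ∧ q + T • v ∈ frontier U := by
  obtain ⟨R, hR⟩ := hB.subset_closedBall q
  have hvn : 0 < ‖v‖ := norm_pos_iff.mpr hv
  set A : Set ℝ := {t : ℝ | 0 ≤ t ∧ q + t • v ∉ U} with hA
  have hAne : A.Nonempty := by
    refine ⟨(|R| + 1) / ‖v‖, ⟨by positivity, ?_⟩⟩
    show q + ((|R| + 1) / ‖v‖) • v ∉ U
    intro hmem
    have := hR hmem
    rw [Metric.mem_closedBall, dist_eq_norm] at this
    have h1 : q + ((|R| + 1) / ‖v‖) • v - q = ((|R| + 1) / ‖v‖) • v := by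
      module
    rw [h1, norm_smul] at this
    have h2 : |(|R| + 1) / ‖v‖| = (|R| + 1) / ‖v‖ := abs_of_pos (by positivity)
    rw [Real.norm_eq_abs, h2, div_mul_cancel₀ _ (ne_of_gt hvn)] at this
    have : |R| + 1 ≤ R := this
    have := le_abs_self R
    linarith
  have hAbdd : BddBelow A := ⟨0, fun t ht => ht.1⟩
  set T := sInf A with hT
  have hT0 : 0 ≤ T := le_csInf hAne (fun t ht => ht.1)
  have hbelow : ∀ τ, 0 ≤ τ → τ < T → q + τ • v ∈ U := by
    intro τ hτ0 hτT
    by_contra hcon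
    have : τ ∈ A := ⟨hτ0, hcon⟩
    have := csInf_le hAbdd this
    linarith
  have hclos : q + T • v ∈ closure U := by
    rcases eq_or_lt_of_le hT0 with heq | hpos
    · rw [← heq]
      simpa using subset_closure hq
    · have hseq : Filter.Tendsto (fun n : ℕ => q + (T - T / (n + 2)) • v)
          Filter.atTop (nhds (q + T • v)) := by
        have h1 : Filter.Tendsto (fun n : ℕ => T - T / (n + 2)) Filter.atTop (nhds T) := by
          have h2 : Filter.Tendsto (fun n : ℕ => T / (n + 2)) Filter.atTop (nhds 0) := by
            apply Filter.Tendsto.div_atTop tendsto_const_nhds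
            exact Filter.tendsto_atTop_add_const_right _ 2 (tendsto_natCast_atTop_atTop)
          simpa using (tendsto_const_nhds (x := T)).sub h2
        exact (tendsto_const_nhds.add ((h1.smul_const v)))
      apply mem_closure_of_tendsto hseq
      filter_upwards with n
      apply hbelow
      · have hc : (1:ℝ) ≤ (n:ℝ) + 2 := by
          have := Nat.cast_nonneg (α := ℝ) n
          linarith
        have hd : T / ((n:ℝ) + 2) ≤ T := by
          rw [div_le_iff₀ (by linarith)]
          nlinarith
        linarith
      · have hpos2 : 0 < T / (n+2) := by positivity
        linarith
  have hnotU : q + T • v ∉ U := by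
    intro hmem
    obtain ⟨ε, hε, hball⟩ := Metric.isOpen_iff.1 hU _ hmem
    have hub : ∀ t, 0 ≤ t → t < T + ε / ‖v‖ → q + t • v ∈ U := by
      intro t ht0 htlt
      rcases lt_or_ge t T with h | h
      · exact hbelow t ht0 h
      · apply hball
        rw [Metric.mem_ball, dist_eq_norm]
        have : q + t • v - (q + T • v) = (t - T) • v := by module
        rw [this, norm_smul, Real.norm_eq_abs, abs_of_nonneg (by linarith)]
        calc (t - T) * ‖v‖ < (ε / ‖v‖) * ‖v‖ := by
              apply mul_lt_mul_of_pos_right _ hvn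
              linarith
        _ = ε := div_mul_cancel₀ _ (ne_of_gt hvn)
    have hlt : T < T + ε / ‖v‖ := by
      have : 0 < ε / ‖v‖ := by positivity
      linarith
    obtain ⟨t, htA, htlt⟩ := exists_lt_of_csInf_lt hAne hlt
    exact htA.2 (hub t htA.1 htlt)
  have hTpos : 0 < T := by
    rcases eq_or_lt_of_le hT0 with heq | hpos
    · exfalso; apply hnotU; rw [← heq]; simpa using hq
    · exact hpos
  refine ⟨T, hTpos, ?_⟩
  rw [frontier, hU.interior_eq]
  exact ⟨hclos, hnotU⟩

def BD8 (qx qy : ℝ) : Prop :=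
  ((qx = 0 ∨ qx = 1/8) ∧ 0 ≤ qy ∧ qy ≤ 1/8) ∨ ((qy = 0 ∨ qy = 1/8) ∧ 0 ≤ qx ∧ qx ≤ 1/8)



lemma le_sqrt2 {c X : ℝ} (hc : 0 ≤ c) (h : c^2 ≤ X) : c ≤ Real.sqrt X := by
  have h1 : Real.sqrt (c^2) ≤ Real.sqrt X := Real.sqrt_le_sqrt h
  rwa [Real.sqrt_sq hc] at h1

lemma lt_sqrt2 {c X : ℝ} (hc : 0 ≤ c) (h : c^2 < X) : c < Real.sqrt X := by
  have h1 : Real.sqrt (c^2) < Real.sqrt X := Real.sqrt_lt_sqrt (sq_nonneg c) h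
  rwa [Real.sqrt_sq hc] at h1

lemma sqrt_le2 {c X : ℝ} (hc : 0 ≤ c) (h : X ≤ c^2) : Real.sqrt X ≤ c := by
  have h1 : Real.sqrt X ≤ Real.sqrt (c^2) := Real.sqrt_le_sqrt h
  rwa [Real.sqrt_sq hc] at h1

/-- key triangle ineq -/
lemma keyL2 (u v y1 : ℝ) (h : y1 ≤ 0) :
    Real.sqrt (u^2 + v^2) + y1 ≤ Real.sqrt (u^2 + (v - y1)^2) := by
  set a := Real.sqrt (u^2 + (v - y1)^2) with ha
  have ha0 : 0 ≤ a := Real.sqrt_nonneg _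
  have ha2 : a^2 = u^2 + (v - y1)^2 := Real.sq_sqrt (by positivity)
  have habs2 : y1 - v ≤ a := by
    rcases le_or_gt (y1 - v) 0 with hc | hc
    · linarith
    · apply le_sqrt2 (le_of_lt hc)
      nlinarith [sq_nonneg u]
  have key : Real.sqrt (u^2 + v^2) ≤ a - y1 := by
    apply sqrt_le2 (by linarith)
    have hprod : 0 ≤ (-y1) * (a + v - y1) := mul_nonneg (by linarith) (by linarith)
    nlinarith
  linarith

/-- ellipse convexity inequality -/
lemma ELL (u w : ℝ) (hw : 0 ≤ w) :
    2 * Real.sqrt ((1/16)^2 + w) ≤ Real.sqrt (u^2 + w) + Real.sqrt ((1/8 - u)^2 + w) := by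
  set a := Real.sqrt (u^2 + w) with hA
  set b := Real.sqrt ((1/8 - u)^2 + w) with hB
  have ha0 : 0 ≤ a := Real.sqrt_nonneg _
  have hb0 : 0 ≤ b := Real.sqrt_nonneg _
  have ha2 : a^2 = u^2 + w := Real.sq_sqrt (by positivity)
  have hb2 : b^2 = (1/8 - u)^2 + w := Real.sq_sqrt (by positivity)
  have hab : u * (1/8 - u) + w ≤ a * b := by
    rcases le_or_gt (u * (1/8 - u) + w) 0 with hc | hc
    · exact le_trans hc (mul_nonneg ha0 hb0)
    · have hsq : (u * (1/8 - u) + w)^2 ≤ (a*b)^2 := by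
        rw [mul_pow, ha2, hb2]
        nlinarith [mul_nonneg hw (sq_nonneg (1/8 - 2*u))]
      nlinarith [mul_nonneg ha0 hb0]
  have hsum : (2 * Real.sqrt ((1/16)^2 + w))^2 ≤ (a + b)^2 := by
    have h2 : (Real.sqrt ((1/16)^2 + w))^2 = (1/16)^2 + w := Real.sq_sqrt (by positivity)
    nlinarith
  have h20 : 0 ≤ 2 * Real.sqrt ((1/16)^2 + w) := by positivity
  nlinarith

set_option maxHeartbeats 2000000 in
lemma core_bottom (y1 x2 y3 x4 u v : ℝ) (hy1 : y1 ≤ 0) (hx2 : 1/8 ≤ x2)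
    (hy3 : 1/8 ≤ y3) (hx4 : x4 ≤ 0)
    (hP : ∀ qx qy : ℝ, BD8 qx qy → 27/20000 < (u - qx)^2 + (v - qy)^2) :
    1/2 + 1/50 < Real.sqrt ((0-u)^2 + (y1-v)^2) + Real.sqrt ((u-x2)^2 + (v-0)^2)
      + Real.sqrt ((x2-1/8)^2 + (0-y3)^2) + Real.sqrt ((1/8-x4)^2 + (y3-1/8)^2)
      + Real.sqrt ((x4-0)^2 + (1/8-y1)^2) := by
  have h23 : (1/8:ℝ) ≤ Real.sqrt ((x2-1/8)^2 + (0-y3)^2) :=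
    le_sqrt2 (by norm_num) (by nlinarith)
  have h34 : (1/8:ℝ) ≤ Real.sqrt ((1/8-x4)^2 + (y3-1/8)^2) :=
    le_sqrt2 (by norm_num) (by nlinarith)
  have h41 : 1/8 - y1 ≤ Real.sqrt ((x4-0)^2 + (1/8-y1)^2) :=
    le_sqrt2 (by linarith) (by nlinarith)
  have hE1 : Real.sqrt ((0-u)^2 + (y1-v)^2) = Real.sqrt (u^2 + (v-y1)^2) := by
    rw [show (0-u)^2 + (y1-v)^2 = u^2 + (v-y1)^2 by ring]
  have hE2 : Real.sqrt ((u-x2)^2 + (v-0)^2) = Real.sqrt ((x2-u)^2 + v^2) := by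
    rw [show (u-x2)^2 + (v-0)^2 = (x2-u)^2 + v^2 by ring]
  rw [hE1, hE2]
  have key : 29/200 + y1 < Real.sqrt (u^2 + (v-y1)^2) + Real.sqrt ((x2-u)^2 + v^2) := by
    have hL2 : Real.sqrt (u^2 + v^2) + y1 ≤ Real.sqrt (u^2 + (v-y1)^2) := keyL2 u v y1 hy1
    rcases lt_or_ge (1/8 : ℝ) v with hv | hv
    · -- v > 1/8
      have h1 : v - y1 ≤ Real.sqrt (u^2 + (v-y1)^2) := le_sqrt2 (by linarith) (by nlinarith)
      have h2 : v ≤ Real.sqrt ((x2-u)^2 + v^2) := le_sqrt2 (by linarith) (by nlinarith)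
      linarith
    · rcases lt_or_ge u 0 with hu | hu
      · -- u < 0
        have h2 : x2 - u ≤ Real.sqrt ((x2-u)^2 + v^2) := le_sqrt2 (by linarith) (by nlinarith)
        rcases le_or_gt 0 v with hv0 | hv0
        · have h27 := hP 0 v (Or.inl ⟨Or.inl rfl, hv0, hv⟩)
          have hu50 : 1/50 < -u := by nlinarith
          have h3 : -u ≤ Real.sqrt (u^2 + v^2) := le_sqrt2 (by linarith) (by nlinarith)
          linarith
        · have h27 := hP 0 0 (Or.inr ⟨Or.inl rfl, le_rfl, by norm_num⟩)
          have h3 : (1/50:ℝ) ≤ Real.sqrt (u^2 + v^2) := le_sqrt2 (by norm_num) (by nlinarith)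
          linarith
      · rcases le_or_gt u (1/8) with hu8 | hu8
        · -- 0 ≤ u ≤ 1/8
          have h27 := hP u 0 (Or.inr ⟨Or.inl rfl, hu, hu8⟩)
          have hv2 : 27/20000 < v^2 := by nlinarith
          have hmono : Real.sqrt ((1/8-u)^2 + v^2) ≤ Real.sqrt ((x2-u)^2 + v^2) :=
            Real.sqrt_le_sqrt (by nlinarith)
          have hell := ELL u (v^2) (sq_nonneg v)
          have hnum : (29/400 : ℝ) < Real.sqrt ((1/16)^2 + v^2) :=
            lt_sqrt2 (by norm_num) (by nlinarith)
          linarith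
        · -- u > 1/8
          rcases le_or_gt 0 v with hv0 | hv0
          · have h27 := hP (1/8) v (Or.inl ⟨Or.inr rfl, hv0, hv⟩)
            have hu50 : 1/8 + 1/50 < u := by nlinarith
            have h1 : u ≤ Real.sqrt (u^2 + (v-y1)^2) := le_sqrt2 (by linarith) (by nlinarith)
            have h2 : (0:ℝ) ≤ Real.sqrt ((x2-u)^2 + v^2) := Real.sqrt_nonneg _
            linarith
          · have h27 := hP (1/8) 0 (Or.inl ⟨Or.inr rfl, le_rfl, by norm_num⟩)
            have h2 : -v ≤ Real.sqrt ((x2-u)^2 + v^2) := le_sqrt2 (by linarith) (by nlinarith)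
            have hsq : u ≤ Real.sqrt (u^2 + v^2) := le_sqrt2 (by linarith) (by nlinarith)
            rcases le_or_gt (21/1000) (-v) with hvv | hvv
            · linarith
            · have hub : 1/8 + 301/10000 < u := by nlinarith
              linarith
  linarith



def mkE (x y : ℝ) : E2 := WithLp.toLp 2 ![x, y]

@[simp] lemma mkE0 (x y : ℝ) : mkE x y 0 = x := rfl
@[simp] lemma mkE1 (x y : ℝ) : mkE x y 1 = y := rfl

lemma addE0 (X Y : E2) (c : ℝ) : (X + c • Y) 0 = X 0 + c * Y 0 := rfl
lemma addE1 (X Y : E2) (c : ℝ) : (X + c • Y) 1 = X 1 + c * Y 1 := rfl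

lemma mkE_ne (x y : ℝ) (h : y ≠ 0) : mkE x y ≠ 0 := by
  intro hc
  have : mkE x y 1 = (0 : E2) 1 := by rw [hc]
  simp at this
  exact h this

lemma BD8_bounds {qx qy : ℝ} (h : BD8 qx qy) :
    0 ≤ qx ∧ qx ≤ 1/8 ∧ 0 ≤ qy ∧ qy ≤ 1/8 := by
  rcases h with ⟨hx, hy0, hy8⟩ | ⟨hy, hx0, hx8⟩
  · rcases hx with h | h <;> subst h <;> norm_num <;> exact ⟨hy0, hy8⟩
  · rcases hy with h | h <;> subst h <;> norm_num <;> exact ⟨hx0, hx8⟩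

lemma frontierS_mem (a b qx qy : ℝ) (h : BD8 qx qy) :
    mkE (a+qx) (b+qy) ∈
      frontier {p : E2 | p 0 ∈ Set.Icc a (a+1/8) ∧ p 1 ∈ Set.Icc b (b+1/8)} := by
  obtain ⟨hx0, hx8, hy0, hy8⟩ := BD8_bounds h
  constructor
  · apply subset_closure
    constructor
    · simp only [mkE0]; constructor <;> [linarith; linarith]
    · simp only [mkE1]; constructor <;> [linarith; linarith]
  · intro hint
    obtain ⟨ε, hε, hball⟩ := Metric.isOpen_iff.1 isOpen_interior _ hint
    have hsub : Metric.ball (mkE (a+qx) (b+qy)) ε ⊆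
        {p : E2 | p 0 ∈ Set.Icc a (a+1/8) ∧ p 1 ∈ Set.Icc b (b+1/8)} :=
      le_trans hball interior_subset
    have hdx : ∀ d : ℝ, |d| < ε →
        (a + qx + d ∈ Set.Icc a (a+1/8) ∧ b + qy ∈ Set.Icc b (b+1/8)) := by
      intro d hd
      have hmem : mkE (a+qx+d) (b+qy) ∈ Metric.ball (mkE (a+qx) (b+qy)) ε := by
        rw [Metric.mem_ball, distE]
        simp only [mkE0, mkE1]
        rw [show (a+qx+d-(a+qx))^2 + (b+qy-(b+qy))^2 = |d|^2 by rw [sq_abs]; ring]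
        rw [Real.sqrt_sq (abs_nonneg d)]
        exact hd
      have := hsub hmem
      simpa using this
    have hdy : ∀ d : ℝ, |d| < ε →
        (b + qy + d ∈ Set.Icc b (b+1/8)) := by
      intro d hd
      have hmem : mkE (a+qx) (b+qy+d) ∈ Metric.ball (mkE (a+qx) (b+qy)) ε := by
        rw [Metric.mem_ball, distE]
        simp only [mkE0, mkE1]
        rw [show (a+qx-(a+qx))^2 + (b+qy+d-(b+qy))^2 = |d|^2 by rw [sq_abs]; ring]
        rw [Real.sqrt_sq (abs_nonneg d)]
        exact hd
      have := hsub hmem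
      simpa using this.2
    rcases h with ⟨hx, -, -⟩ | ⟨hy, -, -⟩
    · rcases hx with h | h
      · have := (hdx (-(ε/2)) (by rw [abs_neg, abs_of_pos (by linarith)]; linarith)).1.1
        subst h; linarith
      · have := (hdx (ε/2) (by rw [abs_of_pos (by linarith)]; linarith)).1.2
        subst h; linarith
    · rcases hy with h | h
      · have := (hdy (-(ε/2)) (by rw [abs_neg, abs_of_pos (by linarith)]; linarith)).1
        subst h; linarith
      · have := (hdy (ε/2) (by rw [abs_of_pos (by linarith)]; linarith)).2
        subst h; linarith

lemma fin5cases (x : Fin 5) : x = 0 ∨ x = 1 ∨ x = 2 ∨ x = 3 ∨ x = 4 := by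
  fin_cases x <;> simp



lemma BD8_rot {qx qy : ℝ} (h : BD8 qx qy) : BD8 (1/8 - qy) qx := by
  rcases h with ⟨hx, hy0, hy8⟩ | ⟨hy, hx0, hx8⟩
  · right
    refine ⟨?_, by linarith, by linarith⟩
    rcases hx with h | h <;> [left; right] <;> exact h
  · left
    refine ⟨?_, by linarith, by linarith⟩
    rcases hy with h | h
    · right; rw [h]; ring
    · left; rw [h]; ring

lemma Pcond_rot {u v : ℝ}
    (hP : ∀ qx qy : ℝ, BD8 qx qy → 27/20000 < (u - qx)^2 + (v - qy)^2) :
    ∀ qx qy : ℝ, BD8 qx qy → 27/20000 < (v - qx)^2 + ((1/8 - u) - qy)^2 := by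
  intro qx qy h
  have h2 := hP (1/8 - qy) qx (BD8_rot h)
  have heq : (u - (1/8 - qy))^2 + (v - qx)^2 = (v - qx)^2 + ((1/8 - u) - qy)^2 := by ring
  linarith


lemma mkE_ne' (x y : ℝ) (h : x ≠ 0) : mkE x y ≠ 0 := by
  intro hc
  have : mkE x y 0 = (0 : E2) 0 := by rw [hc]
  simp at this
  exact h this

lemma sqlt {c X : ℝ} (h : Real.sqrt c < Real.sqrt X) (hc : 0 ≤ c) : c < X := by
  by_contra hcon
  push_neg at hcon
  exact absurd (Real.sqrt_le_sqrt hcon) (not_le.mpr h)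


set_option maxHeartbeats 4000000 in
/-- Any closed curve of length at most `1/2 + 1/50` that encloses an axis-parallel
square of side length `1/8` lies entirely within distance
`√((1/16+1/100)^2 - (1/16)^2)` of the boundary of the square. -/
theorem stmt0 (a b : ℝ) (γ : ℝ → EuclideanSpace ℝ (Fin 2))
    (hcont : ContinuousOn γ (Set.Icc 0 1)) (hclosed : γ 0 = γ 1)
    (hlen : eVariationOn γ (Set.Icc (0:ℝ) 1) ≤ ENNReal.ofReal (1/2 + 1/50))
    (S : Set (EuclideanSpace ℝ (Fin 2)))
    (hS : S = {p | p 0 ∈ Set.Icc a (a + 1/8) ∧ p 1 ∈ Set.Icc b (b + 1/8)})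
    (hencl : ∃ U : Set (EuclideanSpace ℝ (Fin 2)), IsOpen U ∧ Bornology.IsBounded U ∧
      S ⊆ U ∧ frontier U ⊆ γ '' Set.Icc 0 1) :
    ∀ t ∈ Set.Icc (0:ℝ) 1,
      Metric.infDist (γ t) (frontier S) ≤ Real.sqrt ((1/16 + 1/100)^2 - (1/16)^2) := by
  subst hS
  intro t ht
  by_contra hcon
  push_neg at hcon
  rw [show ((1/16 + 1/100 : ℝ))^2 - (1/16)^2 = 27/20000 by norm_num] at hcon
  obtain ⟨U, hUopen, hUbdd, hSU, hfr⟩ := hencl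
  -- the four corners of the square are in U
  have hc1 : mkE a b ∈ U := by
    apply hSU
    refine ⟨?_, ?_⟩ <;> simp only [mkE0, mkE1, Set.mem_Icc] <;>
      exact ⟨le_rfl, by linarith⟩
  have hc2 : mkE (a+1/8) b ∈ U := by
    apply hSU
    refine ⟨?_, ?_⟩ <;> simp only [mkE0, mkE1, Set.mem_Icc] <;>
      constructor <;> linarith
  have hc3 : mkE (a+1/8) (b+1/8) ∈ U := by
    apply hSU
    refine ⟨?_, ?_⟩ <;> simp only [mkE0, mkE1, Set.mem_Icc] <;>
      constructor <;> linarith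
  have hc4 : mkE a (b+1/8) ∈ U := by
    apply hSU
    refine ⟨?_, ?_⟩ <;> simp only [mkE0, mkE1, Set.mem_Icc] <;>
      constructor <;> linarith
  -- ray exits in the four directions
  obtain ⟨T1, hT1pos, hT1fr⟩ := ray_exit hUopen hUbdd hc1 (mkE_ne 0 (-1) (by norm_num))
  obtain ⟨T2, hT2pos, hT2fr⟩ := ray_exit hUopen hUbdd hc2 (mkE_ne' 1 0 (by norm_num))
  obtain ⟨T3, hT3pos, hT3fr⟩ := ray_exit hUopen hUbdd hc3 (mkE_ne 0 1 (by norm_num))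
  obtain ⟨T4, hT4pos, hT4fr⟩ := ray_exit hUopen hUbdd hc4 (mkE_ne' (-1) 0 (by norm_num))
  obtain ⟨t1, ht1, hγ1⟩ := hfr hT1fr
  obtain ⟨t2, ht2, hγ2⟩ := hfr hT2fr
  obtain ⟨t3, ht3, hγ3⟩ := hfr hT3fr
  obtain ⟨t4, ht4, hγ4⟩ := hfr hT4fr
  -- coordinates of the marked points
  obtain ⟨u, hu⟩ : ∃ u : ℝ, γ t 0 = a + u := ⟨γ t 0 - a, by ring⟩
  obtain ⟨v, hv⟩ : ∃ v : ℝ, γ t 1 = b + v := ⟨γ t 1 - b, by ring⟩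
  obtain ⟨y1, hy1, hm1x, hm1y⟩ :
      ∃ y1 : ℝ, y1 ≤ 0 ∧ γ t1 0 = a + 0 ∧ γ t1 1 = b + y1 :=
    ⟨-T1, by linarith, by rw [hγ1, addE0]; simp, by rw [hγ1, addE1]; simp⟩
  obtain ⟨x2, hx2, hm2x, hm2y⟩ :
      ∃ x2 : ℝ, 1/8 ≤ x2 ∧ γ t2 0 = a + x2 ∧ γ t2 1 = b + 0 :=
    ⟨1/8 + T2, by linarith, by rw [hγ2, addE0]; simp; ring, by rw [hγ2, addE1]; simp⟩
  obtain ⟨y3, hy3, hm3x, hm3y⟩ :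
      ∃ y3 : ℝ, 1/8 ≤ y3 ∧ γ t3 0 = a + 1/8 ∧ γ t3 1 = b + y3 :=
    ⟨1/8 + T3, by linarith, by rw [hγ3, addE0]; simp, by rw [hγ3, addE1]; simp; ring⟩
  obtain ⟨x4, hx4, hm4x, hm4y⟩ :
      ∃ x4 : ℝ, x4 ≤ 0 ∧ γ t4 0 = a + x4 ∧ γ t4 1 = b + 1/8 :=
    ⟨-T4, by linarith, by rw [hγ4, addE0]; simp, by rw [hγ4, addE1]; simp⟩
  -- the boundary-distance condition on p = γ t
  have hP : ∀ qx qy : ℝ, BD8 qx qy → 27/20000 < (u - qx)^2 + (v - qy)^2 := by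
    intro qx qy hbd
    have hW := frontierS_mem a b qx qy hbd
    have hdist := Metric.infDist_le_dist_of_mem (x := γ t) hW
    have hlt := lt_of_lt_of_le hcon hdist
    rw [distE] at hlt
    simp only [mkE0, mkE1] at hlt
    rw [hu, hv] at hlt
    have h27 := sqlt hlt (by norm_num)
    have heq : (a + u - (a+qx))^2 + (b + v - (b+qy))^2 = (u - qx)^2 + (v - qy)^2 := by
      ring
    linarith
  -- distance identities, in the forms produced by `core_bottom` and its rotations
  have eB1 : dist (γ t1) (γ t) = Real.sqrt ((0-u)^2 + (y1-v)^2) := by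
    rw [distE, hu, hv, hm1x, hm1y]; congr 1; ring
  have eB2 : dist (γ t) (γ t2) = Real.sqrt ((u-x2)^2 + (v-0)^2) := by
    rw [distE, hu, hv, hm2x, hm2y]; congr 1; ring
  have eB3 : dist (γ t2) (γ t3) = Real.sqrt ((x2-1/8)^2 + (0-y3)^2) := by
    rw [distE, hm2x, hm2y, hm3x, hm3y]; congr 1; ring
  have eB4 : dist (γ t3) (γ t4) = Real.sqrt ((1/8-x4)^2 + (y3-1/8)^2) := by
    rw [distE, hm3x, hm3y, hm4x, hm4y]; congr 1; ring
  have eB5 : dist (γ t4) (γ t1) = Real.sqrt ((x4-0)^2 + (1/8-y1)^2) := by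
    rw [distE, hm4x, hm4y, hm1x, hm1y]; congr 1; ring
  have eR1 : dist (γ t2) (γ t) = Real.sqrt ((0-v)^2 + ((1/8-x2)-(1/8-u))^2) := by
    rw [distE, hu, hv, hm2x, hm2y]; congr 1; ring
  have eR2 : dist (γ t) (γ t3) = Real.sqrt ((v-y3)^2 + ((1/8-u)-0)^2) := by
    rw [distE, hu, hv, hm3x, hm3y]; congr 1; ring
  have eR3 : dist (γ t3) (γ t4) = Real.sqrt ((y3-1/8)^2 + (0-(1/8-x4))^2) := by
    rw [distE, hm3x, hm3y, hm4x, hm4y]; congr 1; ring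
  have eR4 : dist (γ t4) (γ t1) = Real.sqrt ((1/8-y1)^2 + ((1/8-x4)-1/8)^2) := by
    rw [distE, hm4x, hm4y, hm1x, hm1y]; congr 1; ring
  have eR5 : dist (γ t1) (γ t2) = Real.sqrt ((y1-0)^2 + (1/8-(1/8-x2))^2) := by
    rw [distE, hm1x, hm1y, hm2x, hm2y]; congr 1; ring
  have eT1 : dist (γ t3) (γ t) = Real.sqrt ((0-(1/8-u))^2 + ((1/8-y3)-(1/8-v))^2) := by
    rw [distE, hu, hv, hm3x, hm3y]; congr 1; ring
  have eT2 : dist (γ t) (γ t4) = Real.sqrt (((1/8-u)-(1/8-x4))^2 + ((1/8-v)-0)^2) := by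
    rw [distE, hu, hv, hm4x, hm4y]; congr 1; ring
  have eT3 : dist (γ t4) (γ t1) = Real.sqrt (((1/8-x4)-1/8)^2 + (0-(1/8-y1))^2) := by
    rw [distE, hm4x, hm4y, hm1x, hm1y]; congr 1; ring
  have eT4 : dist (γ t1) (γ t2) = Real.sqrt ((1/8-(1/8-x2))^2 + ((1/8-y1)-1/8)^2) := by
    rw [distE, hm1x, hm1y, hm2x, hm2y]; congr 1; ring
  have eT5 : dist (γ t2) (γ t3) = Real.sqrt (((1/8-x2)-0)^2 + (1/8-(1/8-y3))^2) := by
    rw [distE, hm2x, hm2y, hm3x, hm3y]; congr 1; ring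
  have eL1 : dist (γ t4) (γ t) = Real.sqrt ((0-(1/8-v))^2 + (x4-u)^2) := by
    rw [distE, hu, hv, hm4x, hm4y]; congr 1; ring
  have eL2 : dist (γ t) (γ t1) = Real.sqrt (((1/8-v)-(1/8-y1))^2 + (u-0)^2) := by
    rw [distE, hu, hv, hm1x, hm1y]; congr 1; ring
  have eL3 : dist (γ t1) (γ t2) = Real.sqrt (((1/8-y1)-1/8)^2 + (0-x2)^2) := by
    rw [distE, hm1x, hm1y, hm2x, hm2y]; congr 1; ring
  have eL4 : dist (γ t2) (γ t3) = Real.sqrt ((1/8-(1/8-y3))^2 + (x2-1/8)^2) := by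
    rw [distE, hm2x, hm2y, hm3x, hm3y]; congr 1; ring
  have eL5 : dist (γ t3) (γ t4) = Real.sqrt (((1/8-y3)-0)^2 + (1/8-x4)^2) := by
    rw [distE, hm3x, hm3y, hm4x, hm4y]; congr 1; ring
  -- the four slot bounds
  have CBd : 1/2 + 1/50 < dist (γ t1) (γ t) + dist (γ t) (γ t2) + dist (γ t2) (γ t3)
      + dist (γ t3) (γ t4) + dist (γ t4) (γ t1) := by
    rw [eB1, eB2, eB3, eB4, eB5]
    exact core_bottom y1 x2 y3 x4 u v hy1 hx2 hy3 hx4 hP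
  have hP2 := Pcond_rot hP
  have CRd : 1/2 + 1/50 < dist (γ t2) (γ t) + dist (γ t) (γ t3) + dist (γ t3) (γ t4)
      + dist (γ t4) (γ t1) + dist (γ t1) (γ t2) := by
    rw [eR1, eR2, eR3, eR4, eR5]
    exact core_bottom (1/8-x2) y3 (1/8-x4) y1 v (1/8-u)
      (by linarith) hy3 (by linarith) hy1 hP2
  have hP3 := Pcond_rot hP2
  have CTd : 1/2 + 1/50 < dist (γ t3) (γ t) + dist (γ t) (γ t4) + dist (γ t4) (γ t1)
      + dist (γ t1) (γ t2) + dist (γ t2) (γ t3) := by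
    rw [eT1, eT2, eT3, eT4, eT5]
    exact core_bottom (1/8-y3) (1/8-x4) (1/8-y1) (1/8-x2) (1/8-u) (1/8-v)
      (by linarith) (by linarith) (by linarith) (by linarith) hP3
  have hP4 := Pcond_rot hP3
  have hP4' : ∀ qx qy : ℝ, BD8 qx qy → 27/20000 < ((1/8-v) - qx)^2 + (u - qy)^2 := by
    intro qx qy h
    have h2 := hP4 qx qy h
    have heq : ((1/8-v) - qx)^2 + ((1/8-(1/8-u)) - qy)^2
        = ((1/8-v) - qx)^2 + (u - qy)^2 := by ring
    linarith
  have CLd : 1/2 + 1/50 < dist (γ t4) (γ t) + dist (γ t) (γ t1) + dist (γ t1) (γ t2)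
      + dist (γ t2) (γ t3) + dist (γ t3) (γ t4) := by
    rw [eL1, eL2, eL3, eL4, eL5]
    exact core_bottom x4 (1/8-y1) x2 (1/8-y3) (1/8-v) u
      hx4 (by linarith) hx2 (by linarith) hP4'
  -- lower bounds on pairwise distances of the four auxiliary points
  have L12 : (1/8 : ℝ) ≤ dist (γ t1) (γ t2) := by
    rw [distE, hm1x, hm1y, hm2x, hm2y]
    exact le_sqrt2 (by norm_num) (by nlinarith only [hx2, sq_nonneg y1])
  have L23 : (1/8 : ℝ) ≤ dist (γ t2) (γ t3) := by
    rw [distE, hm2x, hm2y, hm3x, hm3y]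
    exact le_sqrt2 (by norm_num) (by nlinarith only [hy3, sq_nonneg (x2 - 1/8)])
  have L34 : (1/8 : ℝ) ≤ dist (γ t3) (γ t4) := by
    rw [distE, hm3x, hm3y, hm4x, hm4y]
    exact le_sqrt2 (by norm_num) (by nlinarith only [hx4, sq_nonneg (y3 - 1/8)])
  have L41 : (1/8 : ℝ) ≤ dist (γ t4) (γ t1) := by
    rw [distE, hm4x, hm4y, hm1x, hm1y]
    exact le_sqrt2 (by norm_num) (by nlinarith only [hy1, sq_nonneg x4])
  have L13 : (17/100 : ℝ) ≤ dist (γ t1) (γ t3) := by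
    rw [distE, hm1x, hm1y, hm3x, hm3y]
    exact le_sqrt2 (by norm_num) (by nlinarith only [hy1, hy3])
  have L24 : (17/100 : ℝ) ≤ dist (γ t2) (γ t4) := by
    rw [distE, hm2x, hm2y, hm4x, hm4y]
    exact le_sqrt2 (by norm_num) (by nlinarith only [hx2, hx4])
  -- sort the five marked times and apply the tour bound
  set T : Fin 5 → ℝ := ![t1, t2, t3, t4, t] with hTdef
  have hTmem : ∀ i, T i ∈ Set.Icc (0:ℝ) 1 := by
    intro i
    fin_cases i <;> first | exact ht1 | exact ht2 | exact ht3 | exact ht4 | exact ht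
  set σ := Tuple.sort T with hσdef
  have Hsum := tour5 γ hclosed hlen (T ∘ σ) (Tuple.monotone_sort T)
    (fun i => hTmem (σ i))
  simp only [Function.comp_apply] at Hsum
  have hTv0 : T 0 = t1 := rfl
  have hTv1 : T 1 = t2 := rfl
  have hTv2 : T 2 = t3 := rfl
  have hTv3 : T 3 = t4 := rfl
  have hTv4 : T 4 = t := rfl
  rcases fin5cases (σ 0) with h0|h0|h0|h0|h0 <;>
  rcases fin5cases (σ 1) with h1|h1|h1|h1|h1 <;>
  first
  | exact absurd (σ.injective (h0.trans h1.symm)) (by decide)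
  | (rcases fin5cases (σ 2) with h2|h2|h2|h2|h2 <;>
     first
     | exact absurd (σ.injective (h0.trans h2.symm)) (by decide)
     | exact absurd (σ.injective (h1.trans h2.symm)) (by decide)
     | (rcases fin5cases (σ 3) with h3|h3|h3|h3|h3 <;>
        first
        | exact absurd (σ.injective (h0.trans h3.symm)) (by decide)
        | exact absurd (σ.injective (h1.trans h3.symm)) (by decide)
        | exact absurd (σ.injective (h2.trans h3.symm)) (by decide)
        | (rcases fin5cases (σ 4) with h4|h4|h4|h4|h4 <;>
           first
           | exact absurd (σ.injective (h0.trans h4.symm)) (by decide)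
           | exact absurd (σ.injective (h1.trans h4.symm)) (by decide)
           | exact absurd (σ.injective (h2.trans h4.symm)) (by decide)
           | exact absurd (σ.injective (h3.trans h4.symm)) (by decide)
           | (rw [h0, h1, h2, h3, h4, hTv0, hTv1, hTv2, hTv3, hTv4] at Hsum
              linarith only [Hsum, CBd, CRd, CTd, CLd, L12, L23, L34, L41, L13, L24,
                dist_triangle (γ t1) (γ t) (γ t2), dist_triangle (γ t1) (γ t) (γ t3),
                dist_triangle (γ t1) (γ t) (γ t4), dist_triangle (γ t2) (γ t) (γ t3),
                dist_triangle (γ t2) (γ t) (γ t4), dist_triangle (γ t3) (γ t) (γ t4),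
                dist_comm (γ t1) (γ t2), dist_comm (γ t1) (γ t3),
                dist_comm (γ t1) (γ t4), dist_comm (γ t2) (γ t3),
                dist_comm (γ t2) (γ t4), dist_comm (γ t3) (γ t4),
                dist_comm (γ t) (γ t1), dist_comm (γ t) (γ t2),
                dist_comm (γ t) (γ t3), dist_comm (γ t) (γ t4)]))))

end
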